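/- The q-bookpile H(q) of an r-vertex graph H decomposes into q^r edge-disjoint copies of H: its edge set is the disjoint union of the edge sets of q^r subgraphs, each isomorphic to H. -/

import Mathlib

/-- A graph together with a labelling of its vertices by the vertices of an
original `r`-vertex graph, and, for each `e ∈ [q]^r`, the embedding of the
standard copy of the original graph indexed by `e`. -/
structure LGraph (q r : ℕ) where
  β : Type
  G : SimpleGraph β
  lab : β → Fin r
  copy : (Fin r → Fin q) → Fin r → β

/-- Vertex set after taking the `q`-book along all copies of the vertex `i`. -/
def StepVerts {q r : ℕ} (X : LGraph q r) (i : Fin r) : Type :=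
  {b : X.β // X.lab b = i} ⊕ (Fin q × {b : X.β // X.lab b ≠ i})

/-- Embedding of the `j`-th page into the book along copies of `i`. -/
def stepEmb {q r : ℕ} (X : LGraph q r) (i : Fin r) (j : Fin q) (b : X.β) :
    StepVerts X i :=
  if h : X.lab b = i then Sum.inl ⟨b, h⟩ else Sum.inr (j, ⟨b, h⟩)

lemma stepEmb_injective {q r : ℕ} (X : LGraph q r) (i : Fin r) (j : Fin q) :
    Function.Injective (stepEmb X i j) := by
  intro a b hab
  by_cases h1 : X.lab a = i <;> by_cases h2 : X.lab b = i
  · have ea : stepEmb X i j a = (Sum.inl ⟨a, h1⟩ : ({b : X.β // X.lab b = i} ⊕ (Fin q × {b : X.β // X.lab b ≠ i}))) := dif_pos h1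
    have eb : stepEmb X i j b = (Sum.inl ⟨b, h2⟩ : ({b : X.β // X.lab b = i} ⊕ (Fin q × {b : X.β // X.lab b ≠ i}))) := dif_pos h2
    rw [ea, eb] at hab
    exact congrArg Subtype.val (Sum.inl_injective hab)
  · have ea : stepEmb X i j a = (Sum.inl ⟨a, h1⟩ : ({b : X.β // X.lab b = i} ⊕ (Fin q × {b : X.β // X.lab b ≠ i}))) := dif_pos h1
    have eb : stepEmb X i j b = (Sum.inr (j, ⟨b, h2⟩) : ({b : X.β // X.lab b = i} ⊕ (Fin q × {b : X.β // X.lab b ≠ i}))) := dif_neg h2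
    rw [ea, eb] at hab; cases hab
  · have ea : stepEmb X i j a = (Sum.inr (j, ⟨a, h1⟩) : ({b : X.β // X.lab b = i} ⊕ (Fin q × {b : X.β // X.lab b ≠ i}))) := dif_neg h1
    have eb : stepEmb X i j b = (Sum.inl ⟨b, h2⟩ : ({b : X.β // X.lab b = i} ⊕ (Fin q × {b : X.β // X.lab b ≠ i}))) := dif_pos h2
    rw [ea, eb] at hab; cases hab
  · have ea : stepEmb X i j a = (Sum.inr (j, ⟨a, h1⟩) : ({b : X.β // X.lab b = i} ⊕ (Fin q × {b : X.β // X.lab b ≠ i}))) := dif_neg h1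
    have eb : stepEmb X i j b = (Sum.inr (j, ⟨b, h2⟩) : ({b : X.β // X.lab b = i} ⊕ (Fin q × {b : X.β // X.lab b ≠ i}))) := dif_neg h2
    rw [ea, eb] at hab
    exact congrArg Subtype.val (congrArg Prod.snd (Sum.inr_injective hab))

/-- One step of the bookpile construction: the `q`-book along all copies
of the vertex `i`. -/
def pileStep {q r : ℕ} (X : LGraph q r) (i : Fin r) : LGraph q r where
  β := StepVerts X i
  G := { Adj := fun a b => ∃ (j : Fin q) (u v : X.β),
            X.G.Adj u v ∧ a = stepEmb X i j u ∧ b = stepEmb X i j v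
         symm := ⟨by rintro a b ⟨j, u, v, h, ha, hb⟩; exact ⟨j, v, u, h.symm, hb, ha⟩⟩
         loopless := ⟨by
           rintro a ⟨j, u, v, h, ha, hb⟩
           exact X.G.irrefl
             (by rwa [stepEmb_injective X i j (ha.symm.trans hb)] at h)⟩ }
  lab := Sum.elim (fun b => X.lab b.1) (fun p => X.lab p.2.1)
  copy := fun e v => stepEmb X i (e i) (X.copy e v)

/-- The `q`-bookpile `H(q)` of an `r`-vertex graph `H`: iterate the book
operation along the copies of each of the `r` vertices of `H`. -/
def bookpile {r : ℕ} (H : SimpleGraph (Fin r)) (q : ℕ) : LGraph q r :=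
  (List.finRange r).foldl pileStep ⟨Fin r, H, id, fun _ v => v⟩

lemma stepEmb_eq {q r : ℕ} (X : LGraph q r) (i : Fin r) {j j' : Fin q} {b b' : X.β}
    (h : stepEmb X i j b = stepEmb X i j' b') :
    b = b' ∧ (X.lab b ≠ i → j = j') := by
  by_cases h1 : X.lab b = i <;> by_cases h2 : X.lab b' = i
  · rw [show stepEmb X i j b = (Sum.inl ⟨b, h1⟩ : ({b : X.β // X.lab b = i} ⊕ (Fin q × {b : X.β // X.lab b ≠ i}))) from dif_pos h1,
      show stepEmb X i j' b' = (Sum.inl ⟨b', h2⟩ : ({b : X.β // X.lab b = i} ⊕ (Fin q × {b : X.β // X.lab b ≠ i}))) from dif_pos h2] at h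
    injection h with h; exact ⟨congrArg Subtype.val h, fun hn => absurd h1 hn⟩
  · rw [show stepEmb X i j b = (Sum.inl ⟨b, h1⟩ : ({b : X.β // X.lab b = i} ⊕ (Fin q × {b : X.β // X.lab b ≠ i}))) from dif_pos h1,
      show stepEmb X i j' b' = (Sum.inr (j', ⟨b', h2⟩) : ({b : X.β // X.lab b = i} ⊕ (Fin q × {b : X.β // X.lab b ≠ i}))) from dif_neg h2] at h; cases h
  · rw [show stepEmb X i j b = (Sum.inr (j, ⟨b, h1⟩) : ({b : X.β // X.lab b = i} ⊕ (Fin q × {b : X.β // X.lab b ≠ i}))) from dif_neg h1,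
      show stepEmb X i j' b' = (Sum.inl ⟨b', h2⟩ : ({b : X.β // X.lab b = i} ⊕ (Fin q × {b : X.β // X.lab b ≠ i}))) from dif_pos h2] at h; cases h
  · rw [show stepEmb X i j b = (Sum.inr (j, ⟨b, h1⟩) : ({b : X.β // X.lab b = i} ⊕ (Fin q × {b : X.β // X.lab b ≠ i}))) from dif_neg h1,
      show stepEmb X i j' b' = (Sum.inr (j', ⟨b', h2⟩) : ({b : X.β // X.lab b = i} ⊕ (Fin q × {b : X.β // X.lab b ≠ i}))) from dif_neg h2] at h
    injection h with h
    exact ⟨congrArg Subtype.val (congrArg Prod.snd h), fun _ => congrArg Prod.fst h⟩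

lemma lab_stepEmb {q r : ℕ} (X : LGraph q r) (i : Fin r) (j : Fin q) (b : X.β) :
    (pileStep X i).lab (stepEmb X i j b) = X.lab b := by
  by_cases h1 : X.lab b = i
  · rw [show stepEmb X i j b = (Sum.inl ⟨b, h1⟩ : ({b : X.β // X.lab b = i} ⊕ (Fin q × {b : X.β // X.lab b ≠ i}))) from dif_pos h1]; rfl
  · rw [show stepEmb X i j b = (Sum.inr (j, ⟨b, h1⟩) : ({b : X.β // X.lab b = i} ⊕ (Fin q × {b : X.β // X.lab b ≠ i}))) from dif_neg h1]; rfl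

/-- The invariant maintained along the bookpile construction, relative to the
set `s` of already-processed vertices of `H`. -/
structure PileInv {r : ℕ} (H : SimpleGraph (Fin r)) (q : ℕ)
    (X : LGraph q r) (s : Set (Fin r)) : Prop where
  lab_copy : ∀ e v, X.lab (X.copy e v) = v
  copy_congr : ∀ e e', (∀ k ∈ s, e k = e' k) → ∀ v, X.copy e v = X.copy e' v
  adj_iff : ∀ e u v, X.G.Adj (X.copy e u) (X.copy e v) ↔ H.Adj u v
  adj_ex : ∀ a b, X.G.Adj a b → ∃ e u v, H.Adj u v ∧ a = X.copy e u ∧ b = X.copy e v ∧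
      ∀ e' u' v', H.Adj u' v' → a = X.copy e' u' → b = X.copy e' v' →
        ∀ k ∈ s, e' k = e k

lemma pileInv_step {r : ℕ} {H : SimpleGraph (Fin r)} {q : ℕ}
    {X : LGraph q r} {s : Set (Fin r)} (h : PileInv H q X s) (i : Fin r) (hi : i ∉ s) :
    PileInv H q (pileStep X i) (insert i s) := by
  have hcopy : ∀ e v, (pileStep X i).copy e v = stepEmb X i (e i) (X.copy e v) :=
    fun _ _ => rfl
  have hadj : ∀ a b, (pileStep X i).G.Adj a b ↔ ∃ (j : Fin q) (u v : X.β),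
      X.G.Adj u v ∧ a = stepEmb X i j u ∧ b = stepEmb X i j v := fun _ _ => Iff.rfl
  constructor
  · intro e v
    rw [hcopy, lab_stepEmb]; exact h.lab_copy e v
  · intro e e' hee v
    rw [hcopy, hcopy, h.copy_congr e e' (fun k hk => hee k (Set.mem_insert_of_mem _ hk)) v,
      hee i (Set.mem_insert i s)]
  · intro e u v
    constructor
    · rw [hadj]
      rintro ⟨j, u0, v0, huv0, ha, hb⟩
      rw [hcopy] at ha hb
      obtain ⟨hu, -⟩ := stepEmb_eq X i ha
      obtain ⟨hv, -⟩ := stepEmb_eq X i hb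
      rw [← hu, ← hv] at huv0
      exact (h.adj_iff e u v).1 huv0
    · intro huv
      rw [hadj]
      exact ⟨e i, X.copy e u, X.copy e v, (h.adj_iff e u v).2 huv, rfl, rfl⟩
  · intro a b hab
    rw [hadj] at hab
    obtain ⟨j, u0, v0, huv0, ha, hb⟩ := hab
    obtain ⟨e, u, v, huv, hu0, hv0, huniq⟩ := h.adj_ex u0 v0 huv0
    refine ⟨Function.update e i j, u, v, huv, ?_, ?_, ?_⟩
    · rw [hcopy, Function.update_self,
        h.copy_congr (Function.update e i j) e
          (fun k hk => Function.update_of_ne (show k ≠ i from fun hki => hi (hki ▸ hk)) j e) u,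
        ← hu0]; exact ha
    · rw [hcopy, Function.update_self,
        h.copy_congr (Function.update e i j) e
          (fun k hk => Function.update_of_ne (show k ≠ i from fun hki => hi (hki ▸ hk)) j e) v,
        ← hv0]; exact hb
    · intro e' u' v' huv' ha' hb' k hk
      rw [hcopy] at ha' hb'
      obtain ⟨hu', hju⟩ := stepEmb_eq X i (ha'.symm.trans ha)
      obtain ⟨hv', hjv⟩ := stepEmb_eq X i (hb'.symm.trans hb)
      have hs : ∀ k ∈ s, e' k = e k := huniq e' u' v' huv' hu'.symm hv'.symm
      rcases Set.mem_insert_iff.1 hk with hk | hk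
      · subst hk
        -- e' k = j = (update e k j) k
        rw [Function.update_self]
        have hlabu : X.lab u0 = u := hu0 ▸ h.lab_copy e u
        have hlabv : X.lab v0 = v := hv0 ▸ h.lab_copy e v
        rcases eq_or_ne u k with hu | hu
        · have hv : v ≠ k := fun hv => huv.ne (hu.trans hv.symm)
          exact hjv (by rw [hv', hlabv]; exact hv)
        · exact hju (by rw [hu', hlabu]; exact hu)
      · rw [hs k hk, Function.update_of_ne (show k ≠ i from fun hki => hi (hki ▸ hk)) j e]

lemma pileInv_congr {r : ℕ} {H : SimpleGraph (Fin r)} {q : ℕ}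
    {X : LGraph q r} {s s' : Set (Fin r)} (h : PileInv H q X s) (hss : s = s') :
    PileInv H q X s' := hss ▸ h

lemma pileInv_fold {r : ℕ} {H : SimpleGraph (Fin r)} {q : ℕ}
    (L : List (Fin r)) :
    ∀ (X : LGraph q r) (s : Set (Fin r)), PileInv H q X s →
    (∀ k ∈ L, k ∉ s) → L.Nodup →
    PileInv H q (L.foldl pileStep X) ({k | k ∈ L} ∪ s) := by
  induction L with
  | nil =>
    intro X s h _ _
    exact pileInv_congr h (by ext k; simp)
  | cons i L ih =>
    intro X s h hL hnd
    have h1 : PileInv H q (pileStep X i) (insert i s) :=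
      pileInv_step h i (hL i List.mem_cons_self)
    have h2 := ih (pileStep X i) (insert i s) h1
      (fun k hk hk' => by
        rcases Set.mem_insert_iff.1 hk' with he | he
        · exact (List.nodup_cons.1 hnd).1 (he ▸ hk)
        · exact hL k (List.mem_cons_of_mem i hk) he)
      (List.nodup_cons.1 hnd).2
    refine pileInv_congr h2 ?_
    ext k; simp [Set.mem_insert_iff]; tauto

lemma pileInv_bookpile {r : ℕ} (H : SimpleGraph (Fin r)) (q : ℕ) (hq : 0 < q) :
    PileInv H q (bookpile H q) Set.univ := by
  have hbase : PileInv H q ⟨Fin r, H, id, fun _ v => v⟩ (∅ : Set (Fin r)) := by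
    constructor
    · intro e v; rfl
    · intro e e' _ v; rfl
    · intro e u v; rfl
    · intro a b hab
      exact ⟨fun _ => ⟨0, hq⟩, a, b, hab, rfl, rfl, fun _ _ _ _ _ _ k hk => absurd hk
        (Set.notMem_empty k)⟩
  have h := pileInv_fold (List.finRange r) ⟨Fin r, H, id, fun _ v => v⟩ ∅ hbase
    (fun k _ hk => absurd hk (Set.notMem_empty k)) (List.nodup_finRange r)
  exact pileInv_congr h (by ext k; simp [List.mem_finRange])

/-- the `q`-bookpile of an `r`-vertex graph `H` decomposes into
`q^r` edge-disjoint copies of `H`: each standard-copy map is an embedding of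
`H` inducing a copy of `H`, and every edge of `H(q)` lies in exactly one
standard copy. -/
theorem bookpile_decomposition {r : ℕ} (H : SimpleGraph (Fin r)) (q : ℕ) (hq : 0 < q) :
    (∀ e : Fin r → Fin q, Function.Injective ((bookpile H q).copy e)) ∧
    (∀ (e : Fin r → Fin q) (u v : Fin r),
        (bookpile H q).G.Adj ((bookpile H q).copy e u) ((bookpile H q).copy e v) ↔
          H.Adj u v) ∧
    (∀ a b : (bookpile H q).β, (bookpile H q).G.Adj a b →
        ∃! e : Fin r → Fin q, ∃ u v : Fin r,
          H.Adj u v ∧ a = (bookpile H q).copy e u ∧ b = (bookpile H q).copy e v) := by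
  have h := pileInv_bookpile H q hq
  refine ⟨?_, h.adj_iff, ?_⟩
  · intro e u v huv
    have := congrArg (bookpile H q).lab huv
    rwa [h.lab_copy, h.lab_copy] at this
  · intro a b hab
    obtain ⟨e, u, v, huv, ha, hb, huniq⟩ := h.adj_ex a b hab
    refine ⟨e, ⟨u, v, huv, ha, hb⟩, ?_⟩
    rintro e' ⟨u', v', huv', ha', hb'⟩
    funext k
    exact huniq e' u' v' huv' ha' hb' k (Set.mem_univ k)
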